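/- Let UT_n(F) carry the elementary G-grading defined by (g_1,...,g_n) (so e_{ij}, i ≤ j, has degree g_i^{-1} g_j). Then the involution ∘ (reflection along the secondary diagonal) is degree-inverting, i.e., (R_g)^∘ ⊆ R_{g^{-1}} for all g ∈ G, if and only if g_1^{-1} g_n = g_2^{-1} g_{n-1} = ... = g_n^{-1} g_1. -/
import Mathlib


open Matrix

/-- The anti-diagonal permutation matrix `S = Σᵢ e_{i, n+1-i}`. -/
def antiDiag (F : Type*) [Field F] (n : ℕ) : Matrix (Fin n) (Fin n) F :=
  Matrix.of fun i j => if j = i.rev then 1 else 0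

/-- The reflection along the secondary diagonal: `A∘ = S Aᵗ S`. -/
def circ {F : Type*} [Field F] {n : ℕ} (A : Matrix (Fin n) (Fin n) F) :
    Matrix (Fin n) (Fin n) F :=
  antiDiag F n * Aᵀ * antiDiag F n

lemma antiDiag_mul {F : Type*} [Field F] {n : ℕ} (B : Matrix (Fin n) (Fin n) F)
    (i j : Fin n) : (antiDiag F n * B) i j = B i.rev j := by
  simp [antiDiag, Matrix.mul_apply]

lemma mul_antiDiag {F : Type*} [Field F] {n : ℕ} (B : Matrix (Fin n) (Fin n) F)
    (i j : Fin n) : (B * antiDiag F n) i j = B i j.rev := by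
  simp only [antiDiag, Matrix.mul_apply, Matrix.of_apply]
  have : ∀ x : Fin n, j = x.rev ↔ x = j.rev := by
    intro x; rw [eq_comm, Fin.rev_eq_iff]
  simp [this]

lemma circ_apply {F : Type*} [Field F] {n : ℕ} (A : Matrix (Fin n) (Fin n) F)
    (i j : Fin n) : circ A i j = A j.rev i.rev := by
  rw [circ, mul_antiDiag, antiDiag_mul, Matrix.transpose_apply]

lemma grp_main {G : Type*} [CommGroup G] {x y z w : G} (h : w⁻¹ * z = (x⁻¹ * y)⁻¹) :
    x⁻¹ * z = y⁻¹ * w := by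
  simp only [inv_mul_eq_div, inv_div] at h
  rw [inv_mul_eq_div, inv_mul_eq_div, div_eq_div_iff_mul_eq_mul]
  rw [div_eq_div_iff_mul_eq_mul] at h
  rw [h, mul_comm]

lemma grp_back {G : Type*} [CommGroup G] {x y z w : G} (h : x⁻¹ * z = y⁻¹ * w) :
    x⁻¹ * y = z⁻¹ * w := by
  rw [inv_mul_eq_div, inv_mul_eq_div, div_eq_div_iff_mul_eq_mul] at h ⊢
  rw [mul_comm]; exact h

lemma aux_fwd {F : Type*} [Field F] {G : Type*} [CommGroup G]
    {n : ℕ} (g : Fin n → G)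
    (h : ∀ (a : G) (A : Matrix (Fin n) (Fin n) F), A.BlockTriangular id →
        (∀ i j : Fin n, (g i)⁻¹ * g j ≠ a → A i j = 0) →
        ∀ i j : Fin n, (g i)⁻¹ * g j ≠ a⁻¹ → circ A i j = 0)
    (i j : Fin n) (hij : i ≤ j) :
    (g i)⁻¹ * g i.rev = (g j)⁻¹ * g j.rev := by
  set A : Matrix (Fin n) (Fin n) F :=
    Matrix.of fun p q => if p = i ∧ q = j then 1 else 0 with hA
  have htri : A.BlockTriangular id := by
    intro p q hpq
    simp only [hA, Matrix.of_apply, ite_eq_right_iff, and_imp]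
    rintro rfl rfl
    exact absurd hij (not_le.mpr hpq)
  have hhom : ∀ p q : Fin n, (g p)⁻¹ * g q ≠ (g i)⁻¹ * g j → A p q = 0 := by
    intro p q hpq
    simp only [hA, Matrix.of_apply, ite_eq_right_iff, and_imp]
    rintro rfl rfl
    exact absurd rfl hpq
  have hdeg : (g j.rev)⁻¹ * g i.rev = ((g i)⁻¹ * g j)⁻¹ := by
    by_contra hdeg
    have := h ((g i)⁻¹ * g j) A htri hhom j.rev i.rev hdeg
    rw [circ_apply, Fin.rev_rev, Fin.rev_rev] at this
    simp [hA] at this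
  exact grp_main hdeg

/-- with the elementary `G`-grading on `UTₙ(F)` defined by
`(g₁,…,gₙ)`, the involution `∘` is degree-inverting iff
`g₁⁻¹gₙ = g₂⁻¹g_{n-1} = ⋯ = gₙ⁻¹g₁`. -/
theorem statement14 {F : Type*} [Field F] {G : Type*} [CommGroup G]
    {n : ℕ} (hn : 0 < n) (g : Fin n → G) :
    (∀ (a : G) (A : Matrix (Fin n) (Fin n) F), A.BlockTriangular id →
        (∀ i j : Fin n, (g i)⁻¹ * g j ≠ a → A i j = 0) →
        ∀ i j : Fin n, (g i)⁻¹ * g j ≠ a⁻¹ → circ A i j = 0) ↔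
      ∀ i j : Fin n, (g i)⁻¹ * g i.rev = (g j)⁻¹ * g j.rev := by
  constructor
  · intro h i j
    rcases le_total i j with hij | hij
    · exact aux_fwd g h i j hij
    · exact (aux_fwd g h j i hij).symm
  · intro hc a A _ hhom i j hne
    rw [circ_apply]
    by_contra hA0
    have hd : (g j.rev)⁻¹ * g i.rev = a := by
      by_contra hd
      exact hA0 (hhom j.rev i.rev hd)
    apply hne
    rw [← hd, _root_.mul_inv_rev, inv_inv]
    exact grp_back (hc i j)
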